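/- In the semidirect product 𝔞 ⋊ μ, where μ = ⟨ζ⟩ is a cyclic group of roots of unity acting on an ideal 𝔞 by multiplication, two elements (r, ζ^i) and (s, ζ^j) are conjugate if and only if i = j and there exist ξ ∈ μ and t ∈ 𝔞 such that s = ξ(r + (1 − ζ^i)t). -/

import Mathlib

open SemidirectProduct Subgroup

/-- The monoid homomorphism `AddAut A →* MulAut (Multiplicative A)`. -/
def addAutToMulAut (A : Type*) [AddGroup A] : Multiplicative (AddAut A) →* MulAut (Multiplicative A) where
  toFun e := AddEquiv.toMultiplicative e
  map_one' := rfl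
  map_mul' _ _ := rfl

variable {R : Type*} [CommRing R]

/-- The action of a subgroup `μ ≤ Rˣ` on (the multiplicative version of) the additive group
of an ideal `𝔞` of `R`, by multiplication. -/
noncomputable def idealAction (μ : Subgroup Rˣ) (𝔞 : Ideal R) :
    ↥μ →* MulAut (Multiplicative ↥𝔞) :=
  (addAutToMulAut ↥𝔞).comp ((DistribMulAction.toAddAut Rˣ ↥𝔞).comp μ.subtype)

/-- The semidirect product `𝔞 ⋊ μ` of an ideal `𝔞 ⊆ R` by a subgroup `μ ≤ Rˣ` acting by
multiplication. -/
noncomputable abbrev IdealSemidirect (μ : Subgroup Rˣ) (𝔞 : Ideal R) :=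
  Multiplicative ↥𝔞 ⋊[idealAction μ 𝔞] ↥μ

lemma idealAction_apply (μ : Subgroup Rˣ) (𝔞 : Ideal R) (a : ↥μ) (x : ↥𝔞) :
    idealAction μ 𝔞 a (Multiplicative.ofAdd x) = Multiplicative.ofAdd ((a : Rˣ) • x) := rfl

lemma conj_formula (μ : Subgroup Rˣ) (𝔞 : Ideal R) (c : ↥𝔞) (a : ↥μ) (r : ↥𝔞) (ρ : ↥μ) :
    (⟨Multiplicative.ofAdd c, a⟩ * ⟨Multiplicative.ofAdd r, ρ⟩ *
        (⟨Multiplicative.ofAdd c, a⟩)⁻¹ : IdealSemidirect μ 𝔞) =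
      ⟨Multiplicative.ofAdd (c + (a : Rˣ) • r - (ρ : Rˣ) • c), a * ρ * a⁻¹⟩ := by
  rw [SemidirectProduct.ext_iff]
  constructor
  · show Multiplicative.ofAdd c * idealAction μ 𝔞 a (Multiplicative.ofAdd r) *
      idealAction μ 𝔞 (a * ρ) (idealAction μ 𝔞 a⁻¹ (Multiplicative.ofAdd c)⁻¹) = _
    have : (Multiplicative.ofAdd c)⁻¹ = Multiplicative.ofAdd (-c) := rfl
    rw [this, idealAction_apply, idealAction_apply, idealAction_apply]
    rw [← ofAdd_add]
    show Multiplicative.ofAdd _ * Multiplicative.ofAdd _ = _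
    rw [← ofAdd_add]
    congr 1
    have h1 : ((a * ρ : ↥μ) : Rˣ) = (a : Rˣ) * (ρ : Rˣ) := rfl
    have h2 : ((a⁻¹ : ↥μ) : Rˣ) = (a : Rˣ)⁻¹ := rfl
    rw [h1, h2, smul_smul]
    have : (a : Rˣ) * (ρ : Rˣ) * ((a : Rˣ))⁻¹ = (ρ : Rˣ) := by
      rw [mul_comm (a : Rˣ) (ρ : Rˣ), mul_assoc, mul_inv_cancel, mul_one]
    rw [this, smul_neg]
    abel
  · show a * ρ * a⁻¹ = a * ρ * a⁻¹
    rfl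

/-- In the semidirect product `𝔞 ⋊ μ`, where `μ = ⟨ζ⟩` is a cyclic group of
roots of unity of order `m` acting on an ideal `𝔞` by multiplication, two elements `(r, ζ^i)`
and `(s, ζ^j)` (with `0 ≤ i, j ≤ m−1`) are conjugate if and only if `i = j` and there exist
`ξ ∈ μ` and `t ∈ 𝔞` such that `s = ξ(r + (1 − ζ^i)t)`. -/
theorem conjugacy_in_ideal_semidirect_product
    (ζ : Rˣ) (m : ℕ) (hζ : orderOf ζ = m) (𝔞 : Ideal R)
    (r s : ↥𝔞) (i j : ℕ) (hi : i < m) (hj : j < m) :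
    (∃ g : IdealSemidirect (zpowers ζ) 𝔞,
        g * ⟨Multiplicative.ofAdd r, ⟨ζ ^ i, pow_mem (mem_zpowers ζ) i⟩⟩ * g⁻¹ =
          ⟨Multiplicative.ofAdd s, ⟨ζ ^ j, pow_mem (mem_zpowers ζ) j⟩⟩) ↔
      (i = j ∧ ∃ ξ : Rˣ, ξ ∈ zpowers ζ ∧ ∃ t : R, t ∈ 𝔞 ∧
        (s : R) = (ξ : R) * ((r : R) + (1 - (ζ : R) ^ i) * t)) := by
  constructor
  · rintro ⟨⟨b, a⟩, hg⟩
    have key : ({ left := b, right := a } : IdealSemidirect (zpowers ζ) 𝔞) *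
        ⟨Multiplicative.ofAdd r, ⟨ζ ^ i, pow_mem (mem_zpowers ζ) i⟩⟩ *
        ({ left := b, right := a } : IdealSemidirect (zpowers ζ) 𝔞)⁻¹ =
        ⟨Multiplicative.ofAdd (b.toAdd + (a : Rˣ) • r -
          ((⟨ζ ^ i, pow_mem (mem_zpowers ζ) i⟩ : zpowers ζ) : Rˣ) • b.toAdd),
          a * ⟨ζ ^ i, pow_mem (mem_zpowers ζ) i⟩ * a⁻¹⟩ :=
      conj_formula (zpowers ζ) 𝔞 b.toAdd a r ⟨ζ ^ i, pow_mem (mem_zpowers ζ) i⟩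
    rw [key] at hg
    set c : ↥𝔞 := b.toAdd with hc
    have h1 : Multiplicative.ofAdd (c + (a : Rˣ) • r -
        ((⟨ζ ^ i, pow_mem (mem_zpowers ζ) i⟩ : zpowers ζ) : Rˣ) • c) =
        Multiplicative.ofAdd s := congrArg SemidirectProduct.left hg
    have h2 : a * (⟨ζ ^ i, pow_mem (mem_zpowers ζ) i⟩ : zpowers ζ) * a⁻¹ =
        ⟨ζ ^ j, pow_mem (mem_zpowers ζ) j⟩ := congrArg SemidirectProduct.right hg
    -- right component
    have ha : (a : Rˣ) * ζ ^ i * (a : Rˣ)⁻¹ = ζ ^ j := by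
      have := congrArg (Subtype.val) h2
      simpa using this
    have hij : ζ ^ i = ζ ^ j := by
      rwa [mul_comm (a : Rˣ) (ζ ^ i), mul_assoc, mul_inv_cancel, mul_one] at ha
    have hijn : i = j := by
      apply pow_injOn_Iio_orderOf (x := ζ) <;> simp [hζ, hi, hj, hij]
    refine ⟨hijn, (a : Rˣ), a.2, ((a : Rˣ)⁻¹ : Rˣ) * c, 𝔞.mul_mem_left _ c.2, ?_⟩
    have h1' : (c + (a : Rˣ) • r -
        ((⟨ζ ^ i, pow_mem (mem_zpowers ζ) i⟩ : zpowers ζ) : Rˣ) • c : ↥𝔞) = s := by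
      exact_mod_cast h1
    have hs : (c : R) + (a : Rˣ) * (r : R) - (ζ : R) ^ i * (c : R) = (s : R) := by
      have h3 := congrArg (Subtype.val) h1'
      push_cast at h3
      simpa [Units.smul_def] using h3
    have hu : ((a : Rˣ) : R) * (((a : Rˣ)⁻¹ : Rˣ) : R) = 1 := by
      rw [← Units.val_mul, mul_inv_cancel, Units.val_one]
    linear_combination -hs - (1 - (ζ : R) ^ i) * (c : R) * hu
  · rintro ⟨rfl, ξ, hξ, t, ht, hs⟩
    refine ⟨⟨Multiplicative.ofAdd (ξ • (⟨t, ht⟩ : ↥𝔞)), ⟨ξ, hξ⟩⟩, ?_⟩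
    rw [conj_formula, SemidirectProduct.ext_iff]
    constructor
    · show Multiplicative.ofAdd _ = Multiplicative.ofAdd _
      congr 1
      apply Subtype.ext
      show (ξ * t + ξ * (r : R) - (ζ : R) ^ i * (ξ * t) : R) = (s : R)
      rw [hs]; ring
    · show (⟨ξ, hξ⟩ : zpowers ζ) * ⟨ζ ^ i, _⟩ * (⟨ξ, hξ⟩ : zpowers ζ)⁻¹ = _
      apply Subtype.ext
      show ξ * ζ ^ i * ξ⁻¹ = ζ ^ i
      rw [mul_comm ξ (ζ ^ i), mul_assoc, mul_inv_cancel, mul_one]
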